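/- Let n, k ∈ ℕ with k ≥ 1, let R > 0, and let y = (y_γ)_{γ∈ℕ^n_{2k}} be a real sequence such that the localizing matrix M_{k−1}((R − ‖x‖₂²)·y) is positive semidefinite, where ‖x‖₂² = x₁² + ⋯ + xₙ². Then for every j = 1,…,k the Riesz functional satisfies L_y(R^j − ‖x‖₂^{2j}) ≥ 0; explicitly, R^j · y₀ − Σ_{γ∈ℕ^n, |γ|=j} (j!/(γ₁!⋯γₙ!)) · y_{2γ} ≥ 0. -/

import Mathlib

open Matrix BigOperators

/-- The set `ℕ^n_k` of multi-indices `α ∈ ℕ^n` with `|α| = α₁ + ⋯ + αₙ ≤ k`. -/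
abbrev MIdx (n k : ℕ) : Type := {α : Fin n → ℕ // ∑ i, α i ≤ k}

noncomputable instance (n k : ℕ) : Fintype (MIdx n k) :=
  Fintype.ofInjective
    (fun a : MIdx n k => fun i : Fin n =>
      (⟨a.1 i, Nat.lt_succ_of_le
        ((Finset.single_le_sum (fun j _ => Nat.zero_le (a.1 j)) (Finset.mem_univ i)).trans
          a.2)⟩ : Fin (k + 1)))
    (fun a b h => Subtype.ext (funext fun i => congrArg Fin.val (congrFun h i)))

/-- The localizing matrix `M_{k−1}((R − ‖x‖₂²)·y)`, indexed by `ℕ^n_{k−1}`, with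
`(α,β)` entry `R·y_{α+β} − Σᵢ y_{α+β+2eᵢ}`. -/
noncomputable def locBall (n k : ℕ) (R : ℝ) (y : (Fin n → ℕ) → ℝ) :
    Matrix (MIdx n (k - 1)) (MIdx n (k - 1)) ℝ :=
  Matrix.of fun α β =>
    R * y (fun j => α.1 j + β.1 j)
      - ∑ i : Fin n, y (fun j => α.1 j + β.1 j + if j = i then 2 else 0)

open MvPolynomial in
noncomputable def myLy (n : ℕ) (y : (Fin n → ℕ) → ℝ) : MvPolynomial (Fin n) ℝ →ₗ[ℝ] ℝ :=
  (Finsupp.linearCombination ℝ (fun d : Fin n →₀ ℕ => y d)).comp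
    (AddMonoidAlgebra.coeffLinearEquiv ℝ).toLinearMap

open MvPolynomial in
lemma myLy_monomial (n : ℕ) (y : (Fin n → ℕ) → ℝ) (d : Fin n →₀ ℕ) (c : ℝ) :
    myLy n y (monomial d c) = c * y d := by
  rw [← single_eq_monomial]
  show Finsupp.linearCombination ℝ (fun d : Fin n →₀ ℕ => y d) (Finsupp.single d c) = c * y d
  rw [Finsupp.linearCombination_single, smul_eq_mul]

open MvPolynomial in
lemma prod_X_pow (n : ℕ) (g : Fin n → ℕ) :
    (∏ i, (X i : MvPolynomial (Fin n) ℝ) ^ g i)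
      = monomial (Finsupp.equivFunOnFinite.symm g) 1 := by
  rw [← prod_X_pow_eq_monomial]
  refine (Finset.prod_subset (Finset.subset_univ _) ?_).symm
  intro i _ hi
  simp only [Finsupp.mem_support_iff, ne_eq, not_not] at hi
  have h : g i = 0 := hi
  simp [h]

open MvPolynomial in
lemma myLy_mono_loc (n : ℕ) (y : (Fin n → ℕ) → ℝ) (R : ℝ) (g : Fin n → ℕ) :
    myLy n y (monomial (Finsupp.equivFunOnFinite.symm g) 1
        * (C R - ∑ i, X i ^ 2))
      = R * y g - ∑ i, y (fun j => g j + if j = i then 2 else 0) := by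
  set d := Finsupp.equivFunOnFinite.symm g with hd
  have h1 : monomial d (1:ℝ) * (C R - ∑ i, X i ^ 2)
      = monomial d R - ∑ i, monomial (d + Finsupp.single i 2) 1 := by
    rw [mul_sub, Finset.mul_sum]
    congr 1
    · rw [mul_comm, C_mul_monomial, mul_one]
    · refine Finset.sum_congr rfl fun i _ => ?_
      rw [X_pow_eq_monomial, monomial_mul, one_mul]
  rw [h1, map_sub, map_sum, myLy_monomial]
  simp only [myLy_monomial, one_mul]
  congr 1
  refine Finset.sum_congr rfl fun i _ => ?_
  congr 1
  funext j
  simp [Finsupp.single_apply, eq_comm]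
  rfl

open MvPolynomial in
lemma bpow (n : ℕ) (s : ℕ) :
    ((∑ i, X i ^ 2 : MvPolynomial (Fin n) ℝ)) ^ s
      = ∑ g ∈ Finset.piAntidiag Finset.univ s,
          C (Nat.multinomial Finset.univ g : ℝ)
            * monomial (Finsupp.equivFunOnFinite.symm (fun j => 2 * g j)) 1 := by
  rw [Finset.sum_pow_eq_sum_piAntidiag]
  refine Finset.sum_congr rfl fun g _ => ?_
  congr 1
  · rw [← prod_X_pow]
    refine Finset.prod_congr rfl fun i _ => ?_
    rw [← pow_mul]

lemma psd_diag_nonneg {m : Type*} [Fintype m] [DecidableEq m] {M : Matrix m m ℝ}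
    (h : M.PosSemidef) (i : m) : 0 ≤ M i i := by
  exact h.diag_nonneg

open MvPolynomial in
lemma key_nonneg (n k : ℕ) (R : ℝ) (y : (Fin n → ℕ) → ℝ)
    (hloc : (locBall n k R y).PosSemidef) :
    ∀ s ≤ k - 1, 0 ≤ myLy n y ((∑ i, X i ^ 2) ^ s * (C R - ∑ i, X i ^ 2)) := by
  intro s hs
  rw [bpow, Finset.sum_mul, map_sum]
  refine Finset.sum_nonneg fun g hg => ?_
  rw [mul_assoc, C_mul', LinearMap.map_smul, smul_eq_mul]
  refine mul_nonneg (Nat.cast_nonneg _) ?_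
  rw [myLy_mono_loc]
  have hg' : ∑ i, g i ≤ k - 1 := by
    rw [Finset.mem_piAntidiag] at hg
    calc ∑ i, g i = s := hg.1
    _ ≤ k - 1 := hs
  have hdiag := psd_diag_nonneg hloc ⟨g, hg'⟩
  simp only [two_mul]
  simpa [locBall] using hdiag


/-- If `M_{k−1}((R − ‖x‖₂²)·y) ⪰ 0`, then for every `j = 1,…,k`,
`L_y(R^j − ‖x‖₂^{2j}) ≥ 0`, i.e.
`R^j·y₀ − Σ_{|γ|=j} (j!/(γ₁!⋯γₙ!))·y_{2γ} ≥ 0`. -/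
theorem stmt11 (n k : ℕ) (hk : 1 ≤ k) (R : ℝ) (hR : 0 < R)
    (y : (Fin n → ℕ) → ℝ) (hloc : (locBall n k R y).PosSemidef) :
    ∀ j : ℕ, 1 ≤ j → j ≤ k →
      0 ≤ R ^ j * y 0
        - ∑ γ ∈ Finset.univ.filter (fun γ : MIdx n k => ∑ i, γ.1 i = j),
            (Nat.multinomial Finset.univ γ.1 : ℝ) * y (fun i => 2 * γ.1 i) := by
  intro j hj1 hjk
  classical
  set b : MvPolynomial (Fin n) ℝ := ∑ i, MvPolynomial.X i ^ 2 with hbdef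
  have hb : R ^ j * y 0
        - ∑ γ ∈ Finset.univ.filter (fun γ : MIdx n k => ∑ i, γ.1 i = j),
            (Nat.multinomial Finset.univ γ.1 : ℝ) * y (fun i => 2 * γ.1 i)
      = myLy n y (MvPolynomial.C R ^ j - b ^ j) := by
    rw [map_sub]
    congr 1
    · rw [← map_pow, MvPolynomial.C_apply, myLy_monomial]
      congr 1
    · rw [hbdef, bpow n j, map_sum]
      have hcoe : ∀ h : Fin n → ℕ, ⇑(Finsupp.equivFunOnFinite.symm h) = h := fun h => rfl
      simp only [MvPolynomial.C_mul', LinearMap.map_smul, myLy_monomial, smul_eq_mul, mul_one,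
        hcoe]
      refine Finset.sum_bij' (fun γ _ => γ.1) (fun g hg => ⟨g, ?_⟩) ?_ ?_ ?_ ?_ ?_
      · rw [Finset.mem_piAntidiag] at hg
        exact hg.1.le.trans hjk
      · intro γ hγ
        rw [Finset.mem_filter] at hγ
        rw [Finset.mem_piAntidiag]
        exact ⟨hγ.2, fun i _ => Finset.mem_univ i⟩
      · intro g hg
        rw [Finset.mem_piAntidiag] at hg
        rw [Finset.mem_filter]
        exact ⟨Finset.mem_univ _, hg.1⟩
      · intro γ hγ; rfl
      · intro g hg; rfl
      · intro γ hγ; simp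
  rw [hb, ← geom_sum₂_mul (MvPolynomial.C R) b j, Finset.sum_mul, map_sum]
  refine Finset.sum_nonneg fun t ht => ?_
  rw [mul_assoc, ← map_pow, MvPolynomial.C_mul', LinearMap.map_smul, smul_eq_mul]
  refine mul_nonneg (pow_nonneg hR.le t) ?_
  refine key_nonneg n k R y hloc (j - 1 - t) ?_
  omega
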